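/- In the trefoil rewriting system ℜ'' with rules x₁ → x₄⁻¹x₃, x₃x₁⁻¹ → x₂⁻¹x₃, x₁⁻¹x₄⁻¹ → x₃⁻¹, x₂ → x₁⁻¹x₃, x₃x₂⁻¹ → x₄⁻¹x₃, x₂⁻¹x₁⁻¹ → x₃⁻¹, x₄ → x₂⁻¹x₃, x₃x₄⁻¹ → x₁⁻¹x₃, x₄⁻¹x₂⁻¹ → x₃⁻¹, x₃⁻¹x₂⁻¹ → x₁⁻¹x₃⁻¹, x₃⁻¹x₁⁻¹ → x₄⁻¹x₃⁻¹, x₃⁻¹x₄⁻¹ → x₂⁻¹x₃⁻¹, together with all free cancellations x_i x_i⁻¹ → ε and x_i⁻¹ x_i → ε (0 ≤ i ≤ 4), every rule application strictly decreases the lexicographic measure V(w) = (V₁, V₂, V₃, V₄) described in the paper; hence the system is terminating. -/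

import Mathlib

/-- The alphabet of the rewriting system ℜ'' for the trefoil knot group:
the generators x₀,…,x₄ and their formal inverses. -/
inductive L3 where
  | x0 | x1 | x2 | x3 | x4 | ix0 | ix1 | ix2 | ix3 | ix4
deriving DecidableEq

open L3

/-- Formal inversion on the alphabet. -/
def inv3 : L3 → L3
  | x0 => ix0 | ix0 => x0 | x1 => ix1 | ix1 => x1 | x2 => ix2 | ix2 => x2
  | x3 => ix3 | ix3 => x3 | x4 => ix4 | ix4 => x4

/-- Sources: x₀, x₃ and their inverses; all other letters are sinks. -/
def isS3 : L3 → Bool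
  | x0 => true | ix0 => true | x3 => true | ix3 => true | _ => false

/-- T⁺ = {x₁, x₂, x₄}: the positive sinks bordering the unbounded region. -/
def isTp3 : L3 → Bool
  | x1 => true | x2 => true | x4 => true | _ => false

/-- Number of sink letters of a word. -/
def sinkCount3 (w : List L3) : ℕ := w.countP fun a => !isS3 a

/-- V₃(w) = Σ_j Σ_{i=0}^{k−j} 2^i n_j from the block decomposition: each source
letter contributes 2^m − 1 where m is the number of sink letters to its right. -/
def V3' : List L3 → ℕ
  | [] => 0
  | a :: w => (if isS3 a then 2 ^ sinkCount3 w - 1 else 0) + V3' w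

/-- The measure V(w) = (V₁(w), V₂(w), V₃(w), V₄(w)). -/
def Vm (w : List L3) : ℕ × ℕ × ℕ × ℕ :=
  (sinkCount3 w, w.countP isTp3, V3' w, w.length)

/-- The rules of the trefoil rewriting system ℜ'', with all free cancellations. -/
def R3 : Set (List L3 × List L3) :=
  {([x1], [ix4, x3]), ([x3, ix1], [ix2, x3]), ([ix1, ix4], [ix3]),
   ([x2], [ix1, x3]), ([x3, ix2], [ix4, x3]), ([ix2, ix1], [ix3]),
   ([x4], [ix2, x3]), ([x3, ix4], [ix1, x3]), ([ix4, ix2], [ix3]),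
   ([ix3, ix2], [ix1, ix3]), ([ix3, ix1], [ix4, ix3]), ([ix3, ix4], [ix2, ix3])} ∪
  {p | ∃ a : L3, p = ([a, inv3 a], ([] : List L3))} ∪
  {p | ∃ a : L3, p = ([inv3 a, a], ([] : List L3))}

/-- Auxiliary: weighted source count with `m` extra sinks appended to the right. -/
def srcPow : List L3 → ℕ → ℕ
  | [], _ => 0
  | a :: u, m => (if isS3 a then 2 ^ (sinkCount3 u + m) - 1 else 0) + srcPow u m

lemma sinkCount3_append (u v : List L3) :
    sinkCount3 (u ++ v) = sinkCount3 u + sinkCount3 v := List.countP_append ..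

lemma V3'_append (u w : List L3) :
    V3' (u ++ w) = srcPow u (sinkCount3 w) + V3' w := by
  induction u with
  | nil => simp [V3', srcPow]
  | cons a u ih =>
      simp [V3', srcPow, ih, sinkCount3_append]
      omega

abbrev Lex4 : ℕ × ℕ × ℕ × ℕ → ℕ × ℕ × ℕ × ℕ → Prop :=
  Prod.Lex (· < ·) (Prod.Lex (· < ·) (Prod.Lex (· < ·) (· < ·)))

/-- The key sufficient condition for a rule `l → r` to decrease the measure in
any context. -/
lemma dec3 (l r : List L3)
    (H : sinkCount3 r < sinkCount3 l ∨
      (sinkCount3 r = sinkCount3 l ∧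
        (r.countP isTp3 < l.countP isTp3 ∨
          (r.countP isTp3 = l.countP isTp3 ∧
            ∀ s, srcPow r s < srcPow l s ∨
              (srcPow r s = srcPow l s ∧ r.length < l.length)))))
    (u v : List L3) : Lex4 (Vm (u ++ r ++ v)) (Vm (u ++ l ++ v)) := by
  simp only [Vm, sinkCount3_append, List.countP_append, List.length_append]
  rcases H with h1 | ⟨h1, H⟩
  · exact Prod.Lex.left _ _ (by omega)
  · rw [h1]
    apply Prod.Lex.right
    rcases H with h2 | ⟨h2, H⟩
    · exact Prod.Lex.left _ _ (by omega)
    · rw [h2]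
      apply Prod.Lex.right
      have e1 : V3' (u ++ r ++ v) =
          srcPow u (sinkCount3 r + sinkCount3 v) + (srcPow r (sinkCount3 v) + V3' v) := by
        rw [List.append_assoc, V3'_append, V3'_append, sinkCount3_append]
      have e2 : V3' (u ++ l ++ v) =
          srcPow u (sinkCount3 l + sinkCount3 v) + (srcPow l (sinkCount3 v) + V3' v) := by
        rw [List.append_assoc, V3'_append, V3'_append, sinkCount3_append]
      rw [e1, e2, h1]
      rcases H (sinkCount3 v) with h3 | ⟨h3, h4⟩
      · exact Prod.Lex.left _ _ (by omega)
      · rw [h3]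
        exact Prod.Lex.right _ (by omega)

lemma two_pow_aux (s : ℕ) : 1 ≤ 2 ^ s ∧ 2 ^ (1 + s) = 2 * 2 ^ s := by
  constructor
  · exact Nat.one_le_two_pow
  · rw [pow_add, pow_one]

/-- Every rule application in the trefoil system ℜ'' strictly decreases the
lexicographic measure V; hence the system is terminating. -/
theorem stmt_13 :
    (∀ u v l r, (l, r) ∈ R3 →
      Prod.Lex (· < ·) (Prod.Lex (· < ·) (Prod.Lex (· < ·) (· < ·)))
        (Vm (u ++ r ++ v)) (Vm (u ++ l ++ v))) ∧
    ¬ ∃ f : ℕ → List L3, ∀ n, ∃ u v l r,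
      (l, r) ∈ R3 ∧ f n = u ++ l ++ v ∧ f (n + 1) = u ++ r ++ v := by
  have main : ∀ u v l r, (l, r) ∈ R3 → Lex4 (Vm (u ++ r ++ v)) (Vm (u ++ l ++ v)) := by
    intro u v l r h
    simp only [R3, Set.mem_union, Set.mem_insert_iff, Set.mem_singleton_iff,
      Set.mem_setOf_eq, Prod.mk.injEq] at h
    apply dec3
    rcases h with ((h|h|h|h|h|h|h|h|h|h|h|h) | ⟨a, ha⟩) | ⟨a, ha⟩
    -- the twelve knot rules
    · obtain ⟨rfl, rfl⟩ := h; exact Or.inr ⟨by decide, Or.inl (by decide)⟩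
    · obtain ⟨rfl, rfl⟩ := h
      refine Or.inr ⟨by decide, Or.inr ⟨by decide, fun s => Or.inl ?_⟩⟩
      simp [srcPow, sinkCount3, isS3, List.countP, List.countP.go]
      have := two_pow_aux s; omega
    · obtain ⟨rfl, rfl⟩ := h; exact Or.inl (by decide)
    · obtain ⟨rfl, rfl⟩ := h; exact Or.inr ⟨by decide, Or.inl (by decide)⟩
    · obtain ⟨rfl, rfl⟩ := h
      refine Or.inr ⟨by decide, Or.inr ⟨by decide, fun s => Or.inl ?_⟩⟩
      simp [srcPow, sinkCount3, isS3, List.countP, List.countP.go]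
      have := two_pow_aux s; omega
    · obtain ⟨rfl, rfl⟩ := h; exact Or.inl (by decide)
    · obtain ⟨rfl, rfl⟩ := h; exact Or.inr ⟨by decide, Or.inl (by decide)⟩
    · obtain ⟨rfl, rfl⟩ := h
      refine Or.inr ⟨by decide, Or.inr ⟨by decide, fun s => Or.inl ?_⟩⟩
      simp [srcPow, sinkCount3, isS3, List.countP, List.countP.go]
      have := two_pow_aux s; omega
    · obtain ⟨rfl, rfl⟩ := h; exact Or.inl (by decide)
    · obtain ⟨rfl, rfl⟩ := h
      refine Or.inr ⟨by decide, Or.inr ⟨by decide, fun s => Or.inl ?_⟩⟩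
      simp [srcPow, sinkCount3, isS3, List.countP, List.countP.go]
      have := two_pow_aux s; omega
    · obtain ⟨rfl, rfl⟩ := h
      refine Or.inr ⟨by decide, Or.inr ⟨by decide, fun s => Or.inl ?_⟩⟩
      simp [srcPow, sinkCount3, isS3, List.countP, List.countP.go]
      have := two_pow_aux s; omega
    · obtain ⟨rfl, rfl⟩ := h
      refine Or.inr ⟨by decide, Or.inr ⟨by decide, fun s => Or.inl ?_⟩⟩
      simp [srcPow, sinkCount3, isS3, List.countP, List.countP.go]
      have := two_pow_aux s; omega
    -- free cancellations
    all_goals (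
      obtain ⟨rfl, rfl⟩ := Prod.mk.injEq .. ▸ ha
      cases a <;>
        first
          | exact Or.inl (by decide)
          | (refine Or.inr ⟨by decide, Or.inr ⟨by decide, fun s => ?_⟩⟩
             simp [srcPow, inv3, sinkCount3, isS3, List.countP, List.countP.go]
             have := two_pow_aux s
             rcases Nat.eq_zero_or_pos s with rfl | hs
             · right; simp [srcPow, List.length]
             · left; omega))
  refine ⟨main, ?_⟩
  rintro ⟨f, hf⟩
  have wf : WellFounded Lex4 :=
    (Nat.lt_wfRel.wf).prod_lex ((Nat.lt_wfRel.wf).prod_lex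
      ((Nat.lt_wfRel.wf).prod_lex (Nat.lt_wfRel.wf)))
  have hd : ∀ n, Lex4 (Vm (f (n + 1))) (Vm (f n)) := by
    intro n
    obtain ⟨u, v, l, r, hr, h1, h2⟩ := hf n
    rw [h1, h2]
    exact main u v l r hr
  exact (RelEmbedding.natGT (fun n => Vm (f n)) hd).not_wellFounded wf
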